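/- The complexification of the Segre ideal, I₀·ℂ[X] where I₀ = ⟨x_a x_b − x_{a∨b} x_{a∧b} : (a,b) ∈ S⟩, is a radical ideal of ℂ[x_a : a ∈ [n₁]×⋯×[n_d]]. -/

import Mathlib

open MvPolynomial

namespace SegreAux

variable {d : ℕ} {n : Fin d → ℕ}

abbrev σt (n : Fin d → ℕ) := (i : Fin d) → Fin (n i)
abbrev τt (n : Fin d → ℕ) := (i : Fin d) × Fin (n i)

def Jset (n : Fin d → ℕ) : Set (MvPolynomial (σt n) ℂ) :=
  {p | ∃ a b : σt n, (∃ i, b i < a i) ∧ (∃ j, a j < b j) ∧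
    p = X a * X b - X (a ⊔ b) * X (a ⊓ b)}

noncomputable def J (n : Fin d → ℕ) : Ideal (MvPolynomial (σt n) ℂ) := Ideal.span (Jset n)

lemma lemG (a b : σt n) : X a * X b - X (a ⊔ b) * X (a ⊓ b) ∈ J n := by
  by_cases hab : a ≤ b
  · rw [sup_eq_right.mpr hab, inf_eq_left.mpr hab, mul_comm, sub_self]
    exact zero_mem _
  by_cases hba : b ≤ a
  · rw [sup_eq_left.mpr hba, inf_eq_right.mpr hba, sub_self]
    exact zero_mem _
  · refine Ideal.subset_span ⟨a, b, ?_, ?_, rfl⟩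
    · simpa [Pi.le_def, not_forall, not_le] using hab
    · simpa [Pi.le_def, not_forall, not_le] using hba

noncomputable def P (M : Multiset (σt n)) : MvPolynomial (σt n) ℂ := (M.map X).prod

@[simp] lemma P_zero : P (0 : Multiset (σt n)) = 1 := rfl

@[simp] lemma P_cons (a : σt n) (M : Multiset (σt n)) : P (a ::ₘ M) = X a * P M := by
  simp [P]

lemma cons_inf_sup {α : Type*} [LinearOrder α] (x y : α) (s : Multiset α) :
    x ::ₘ y ::ₘ s = (x ⊓ y) ::ₘ (x ⊔ y) ::ₘ s := by
  rcases le_total x y with h | h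
  · simp [inf_eq_left.mpr h, sup_eq_right.mpr h]
  · rw [inf_eq_right.mpr h, sup_eq_left.mpr h, Multiset.cons_swap]

lemma lemB (M : Multiset (σt n)) (hM : M ≠ 0) :
    ∃ (c : σt n) (M'' : Multiset (σt n)),
      (∀ i, M.map (· i) = c i ::ₘ M''.map (· i)) ∧
      (∀ a ∈ M, c ≤ a) ∧ P M - X c * P M'' ∈ J n := by
  induction M using Multiset.induction_on with
  | empty => exact absurd rfl hM
  | cons a M₀ ih =>
    by_cases h0 : M₀ = 0
    · subst h0
      exact ⟨a, 0, fun i => by simp, fun b hb => by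
        simp only [Multiset.mem_cons, Multiset.notMem_zero, or_false] at hb
        exact hb ▸ le_rfl,
        by rw [P_cons]; simp⟩
    · obtain ⟨c₀, M₁, hmap, hmin, hmem⟩ := ih h0
      refine ⟨a ⊓ c₀, (a ⊔ c₀) ::ₘ M₁, fun i => ?_, fun b hb => ?_, ?_⟩
      · have := hmap i
        simp only [Multiset.map_cons, this, Pi.inf_apply, Pi.sup_apply]
        exact cons_inf_sup _ _ _
      · rcases Multiset.mem_cons.mp hb with rfl | hb
        · exact inf_le_left
        · exact le_trans inf_le_right (hmin b hb)
      · have key : P (a ::ₘ M₀) - X (a ⊓ c₀) * P ((a ⊔ c₀) ::ₘ M₁)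
            = X a * (P M₀ - X c₀ * P M₁)
              + (X a * X c₀ - X (a ⊔ c₀) * X (a ⊓ c₀)) * P M₁ := by
          simp only [P_cons]; ring
        rw [key]
        have h1 : X a * X c₀ - X (a ⊔ c₀) * X (a ⊓ c₀) ∈ J n := by
          have := lemG (n := n) a c₀
          simpa using this
        exact add_mem (Ideal.mul_mem_left _ _ hmem) (Ideal.mul_mem_right _ _ h1)

lemma lemS (i₀ : Fin d) (k : ℕ) : ∀ (M M' : Multiset (σt n)), M.card = k →
    (∀ i, M.map (· i) = M'.map (· i)) → P M - P M' ∈ J n := by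
  induction k using Nat.strong_induction_on with
  | _ k ih =>
    intro M M' hcard hinv
    have hcard' : M'.card = k := by
      have := congrArg Multiset.card (hinv i₀)
      simpa [hcard] using this.symm
    rcases Nat.eq_zero_or_pos k with rfl | hk
    · rw [Multiset.card_eq_zero.mp hcard, Multiset.card_eq_zero.mp hcard']
      simp
    · have hM : M ≠ 0 := by
        intro h; rw [h] at hcard; simp at hcard; omega
      have hM' : M' ≠ 0 := by
        intro h; rw [h] at hcard'; simp at hcard'; omega
      obtain ⟨c, M'', hmap, hmin, hmem⟩ := lemB M hM
      obtain ⟨c', M''', hmap', hmin', hmem'⟩ := lemB M' hM'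
      have hcc : c = c' := by
        funext i
        have h1 : c i ≤ c' i := by
          have : c' i ∈ M.map (· i) := by
            rw [hinv i, hmap' i]; exact Multiset.mem_cons_self _ _
          obtain ⟨a, haM, ha⟩ := Multiset.mem_map.mp this
          exact ha ▸ hmin a haM i
        have h2 : c' i ≤ c i := by
          have : c i ∈ M'.map (· i) := by
            rw [← hinv i, hmap i]; exact Multiset.mem_cons_self _ _
          obtain ⟨a, haM, ha⟩ := Multiset.mem_map.mp this
          exact ha ▸ hmin' a haM i
        exact le_antisymm h1 h2
      subst hcc
      have hinv'' : ∀ i, M''.map (· i) = M'''.map (· i) := by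
        intro i
        have : c i ::ₘ M''.map (· i) = c i ::ₘ M'''.map (· i) := by
          rw [← hmap i, hinv i, hmap' i]
        exact (Multiset.cons_inj_right _).mp this
      have hcard'' : M''.card = k - 1 := by
        have := congrArg Multiset.card (hmap i₀)
        simp [hcard] at this; omega
      have hIH := ih (k - 1) (by omega) M'' M''' hcard'' hinv''
      have key : P M - P M' = (P M - X c * P M'') + X c * (P M'' - P M''')
          - (P M' - X c * P M''') := by ring
      rw [key]
      exact sub_mem (add_mem hmem (Ideal.mul_mem_left _ _ hIH)) hmem'

noncomputable def φ (n : Fin d → ℕ) :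
    MvPolynomial (σt n) ℂ →ₐ[ℂ] MvPolynomial (τt n) ℂ :=
  aeval (fun a : σt n => ∏ i, X (⟨i, a i⟩ : τt n))

noncomputable def Ee (M : Multiset (σt n)) : (τt n) →₀ ℕ :=
  (M.map fun a => ∑ i, Finsupp.single (⟨i, a i⟩ : τt n) 1).sum

lemma prod_X_single {ι τ : Type*} (s : Finset ι) (f : ι → τ) :
    (∏ i ∈ s, (X (f i) : MvPolynomial τ ℂ)) =
      monomial (∑ i ∈ s, Finsupp.single (f i) 1) 1 := by
  classical
  induction s using Finset.induction_on with
  | empty => simp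
  | insert _ _ hx ih =>
    rw [Finset.prod_insert hx, Finset.sum_insert hx, ih, monomial_single_add, pow_one]

lemma φ_P (M : Multiset (σt n)) : φ n (P M) = monomial (Ee M) 1 := by
  induction M using Multiset.induction_on with
  | empty => simp [P, Ee]
  | cons a M ih =>
    rw [P_cons, map_mul, ih]
    have ha : φ n (X a) = monomial (∑ i, Finsupp.single (⟨i, a i⟩ : τt n) 1) 1 := by
      rw [φ, aeval_X, prod_X_single]
    rw [ha, monomial_mul, one_mul]
    congr 1
    simp [Ee, Multiset.sum_cons]

lemma Ee_apply (M : Multiset (σt n)) (i : Fin d) (j : Fin (n i)) :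
    Ee M ⟨i, j⟩ = (M.map (· i)).count j := by
  classical
  induction M using Multiset.induction_on with
  | empty => simp [Ee]
  | cons a M ih =>
    rw [show Ee (a ::ₘ M) = (∑ i', Finsupp.single (⟨i', a i'⟩ : τt n) 1) + Ee M by
      simp [Ee, Multiset.sum_cons]]
    have hsum : (∑ i', Finsupp.single (⟨i', a i'⟩ : τt n) 1) ⟨i, j⟩
        = if j = a i then 1 else 0 := by
      rw [Finsupp.finset_sum_apply, Finset.sum_eq_single i]
      · simp [Finsupp.single_apply, Sigma.ext_iff, eq_comm]
      · intro b _ hb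
        rw [Finsupp.single_apply, if_neg]
        intro h
        exact hb (congrArg Sigma.fst h)
      · simp
    rw [Finsupp.add_apply, ih, hsum, Multiset.map_cons, Multiset.count_cons]
    rcases eq_or_ne j (a i) with h | h <;> simp [h, add_comm]

lemma Ee_inj {M M' : Multiset (σt n)} (h : Ee M = Ee M') :
    ∀ i, M.map (· i) = M'.map (· i) := by
  intro i
  ext j
  rw [← Ee_apply, ← Ee_apply, h]

lemma monomial_eq_P (s : (σt n) →₀ ℕ) :
    monomial s (1 : ℂ) = P s.toMultiset := by
  induction s using Finsupp.induction with
  | zero => simp [P]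
  | single_add a k s ha hk ih =>
    rw [monomial_single_add, ih]
    rw [Finsupp.toMultiset_add, Finsupp.toMultiset_single]
    simp [P, Multiset.nsmul_singleton, Multiset.map_replicate, Multiset.prod_replicate]

lemma J_le_ker : J n ≤ RingHom.ker (φ n).toRingHom := by
  rw [J, Ideal.span_le]
  rintro p ⟨a, b, -, -, rfl⟩
  rw [SetLike.mem_coe, RingHom.mem_ker]
  simp only [AlgHom.toRingHom_eq_coe, RingHom.coe_coe, map_sub, map_mul]
  rw [φ, aeval_X, aeval_X, aeval_X, aeval_X]
  rw [← Finset.prod_mul_distrib, ← Finset.prod_mul_distrib]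
  rw [sub_eq_zero]
  refine Finset.prod_congr rfl fun i _ => ?_
  show (X ⟨i, a i⟩ : MvPolynomial (τt n) ℂ) * X ⟨i, b i⟩ = X ⟨i, (a ⊔ b) i⟩ * X ⟨i, (a ⊓ b) i⟩
  rw [Pi.sup_apply, Pi.inf_apply]
  rcases le_total (a i) (b i) with h | h
  · rw [sup_eq_right.mpr h, inf_eq_left.mpr h, mul_comm]
  · rw [sup_eq_left.mpr h, inf_eq_right.mpr h]

lemma ker_le_J (i₀ : Fin d) : RingHom.ker (φ n).toRingHom ≤ J n := by
  classical
  set q : MvPolynomial (σt n) ℂ →ₐ[ℂ] MvPolynomial (σt n) ℂ ⧸ J n :=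
    Ideal.Quotient.mkₐ ℂ (J n) with hq
  set g : ((τt n) →₀ ℕ) → (MvPolynomial (σt n) ℂ ⧸ J n) := fun t =>
    if h : ∃ M : Multiset (σt n), Ee M = t then q (P h.choose) else 0 with hg
  have hgP : ∀ M : Multiset (σt n), g (Ee M) = q (P M) := by
    intro M
    have h : ∃ M' : Multiset (σt n), Ee M' = Ee M := ⟨M, rfl⟩
    rw [hg]
    simp only [dif_pos h]
    have hch : Ee h.choose = Ee M := h.choose_spec
    have := lemS i₀ (h.choose.card) h.choose M rfl (Ee_inj hch)
    rw [hq]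
    simp only [Ideal.Quotient.mkₐ_eq_mk]
    exact Ideal.Quotient.eq.mpr this
  set Ψ : MvPolynomial (τt n) ℂ →ₗ[ℂ] (MvPolynomial (σt n) ℂ ⧸ J n) :=
    (basisMonomials (τt n) ℂ).constr ℂ g with hΨ
  have key : (Ψ.comp (φ n).toLinearMap) = q.toLinearMap := by
    apply Module.Basis.ext (basisMonomials (σt n) ℂ)
    intro s
    rw [coe_basisMonomials]
    simp only [LinearMap.comp_apply, AlgHom.toLinearMap_apply]
    rw [monomial_eq_P, φ_P]
    have : (monomial (Ee s.toMultiset) (1:ℂ)) = basisMonomials (τt n) ℂ (Ee s.toMultiset) := by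
      rw [coe_basisMonomials]
    rw [this, hΨ, Module.Basis.constr_basis, hgP]
  intro p hp
  rw [RingHom.mem_ker] at hp
  have : q p = 0 := by
    have h2 := LinearMap.congr_fun key p
    simp only [LinearMap.comp_apply, AlgHom.toLinearMap_apply] at h2
    rw [← h2]
    simp only [AlgHom.toRingHom_eq_coe, RingHom.coe_coe] at hp
    rw [hp, map_zero]
  rw [hq] at this
  simpa only [Ideal.Quotient.mkₐ_eq_mk, Ideal.Quotient.eq_zero_iff_mem] using this

lemma J_isRadical (i₀ : Fin d) : (J n).IsRadical := by
  have : J n = RingHom.ker (φ n).toRingHom := le_antisymm J_le_ker (ker_le_J i₀)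
  rw [this]
  exact (RingHom.ker_isPrime _).isRadical

end SegreAux

namespace SegreAux

theorem main (d : ℕ) (n : Fin d → ℕ)
    (I₀ : Ideal (MvPolynomial ((i : Fin d) → Fin (n i)) ℝ))
    (hI₀ : I₀ = Ideal.span {p | ∃ a b : (i : Fin d) → Fin (n i),
      (∃ i, b i < a i) ∧ (∃ j, a j < b j) ∧
      p = MvPolynomial.X a * MvPolynomial.X b -
          MvPolynomial.X (a ⊔ b) * MvPolynomial.X (a ⊓ b)}) :
    (Ideal.map (MvPolynomial.map (algebraMap ℝ ℂ)) I₀).IsRadical := by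
  have hmap : Ideal.map (MvPolynomial.map (algebraMap ℝ ℂ)) I₀ = J n := by
    rw [hI₀, Ideal.map_span, J, Jset]
    congr 1
    ext p
    constructor
    · rintro ⟨q, ⟨a, b, h1, h2, rfl⟩, rfl⟩
      exact ⟨a, b, h1, h2, by simp [map_sub, map_mul, MvPolynomial.map_X]⟩
    · rintro ⟨a, b, h1, h2, rfl⟩
      exact ⟨X a * X b - X (a ⊔ b) * X (a ⊓ b), ⟨a, b, h1, h2, rfl⟩,
        by simp [map_sub, map_mul, MvPolynomial.map_X]⟩
  rw [hmap]
  rcases Nat.eq_zero_or_pos d with rfl | hd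
  · have hempty : Jset n = ∅ := by
      ext p
      simp only [Jset, Set.mem_setOf_eq, Set.mem_empty_iff_false, iff_false]
      rintro ⟨a, b, ⟨i, -⟩, -, -⟩
      exact i.elim0
    rw [J, hempty, Ideal.span_empty]
    exact Ideal.bot_prime.isRadical
  · exact J_isRadical ⟨0, hd⟩

end SegreAux

/-- The complexification `I₀·ℂ[X]` of the Segre ideal
`I₀ = ⟨x_a x_b − x_{a∨b} x_{a∧b} : (a,b) ∈ S⟩ ⊆ ℝ[X]` is a radical ideal of `ℂ[X]`. -/
theorem stmt_13 (d : ℕ) (n : Fin d → ℕ)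
    (I₀ : Ideal (MvPolynomial ((i : Fin d) → Fin (n i)) ℝ))
    (hI₀ : I₀ = Ideal.span {p | ∃ a b : (i : Fin d) → Fin (n i),
      (∃ i, b i < a i) ∧ (∃ j, a j < b j) ∧
      p = MvPolynomial.X a * MvPolynomial.X b -
          MvPolynomial.X (a ⊔ b) * MvPolynomial.X (a ⊓ b)}) :
    (Ideal.map (MvPolynomial.map (algebraMap ℝ ℂ)) I₀).IsRadical :=
  SegreAux.main d n I₀ hI₀
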